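/- arXiv:1810.08369 — 2 statements merged into one kernel-verified Lean document; each statement's English description precedes it below -/
import Mathlib

section
/- Let ν be any probability measure on ℝⁿ and let f : ℝⁿ → ℝ be a bounded Lipschitz function. Then for every r > 0, ∫|f − m_ν(f)| dν ≤ r·‖|∇f|‖_∞ + 2·α_ν(r)·Osc(f). -/
open MeasureTheory Real Set
open scoped ENNReal NNReal Pointwise

noncomputable section

/-- Euclidean space ℝⁿ. -/
abbrev Eucl (n : ℕ) := EuclideanSpace ℝ (Fin n)

/-- A measure `ν` on ℝⁿ is log-concave if `dν = e^{-V(x)} dx` for some convex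
`V : ℝⁿ → ℝ ∪ {+∞}`; equivalently, `ν` has a density `ρ = e^{-V}` w.r.t. Lebesgue
measure satisfying `ρ(a x + b y) ≥ ρ(x)^a ρ(y)^b` whenever `a, b ≥ 0`, `a + b = 1`. -/
def IsLogConcave {n : ℕ} (ν : Measure (Eucl n)) : Prop :=
  ∃ ρ : Eucl n → ℝ, (∀ x, 0 ≤ ρ x) ∧
    ν = volume.withDensity (fun x => ENNReal.ofReal (ρ x)) ∧
    ∀ x y : Eucl n, ∀ a b : ℝ, 0 ≤ a → 0 ≤ b → a + b = 1 →
      ρ x ^ a * ρ y ^ b ≤ ρ (a • x + b • y)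

/-- `m` is a median of `f` under `ν`. -/
def IsMedian {n : ℕ} (ν : Measure (Eucl n)) (f : Eucl n → ℝ) (m : ℝ) : Prop :=
  (1 : ℝ≥0∞) / 2 ≤ ν {x | f x ≤ m} ∧ (1 : ℝ≥0∞) / 2 ≤ ν {x | m ≤ f x}

/-- The Euclidean norm of the (a.e. defined) gradient of `f`. -/
def gradNorm {n : ℕ} (f : Eucl n → ℝ) (x : Eucl n) : ℝ := ‖fderiv ℝ f x‖

/-- The oscillation `sup f - inf f` of a function. -/
def oscil {n : ℕ} (f : Eucl n → ℝ) : ℝ := sSup (Set.range f) - sInf (Set.range f)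

/-- `f` is a bounded function. -/
def IsBoundedFun {n : ℕ} (f : Eucl n → ℝ) : Prop := ∃ M : ℝ, ∀ x, |f x| ≤ M

/-- Variance of `f` under `ν`. -/
def var {n : ℕ} (ν : Measure (Eucl n)) (f : Eucl n → ℝ) : ℝ :=
  ∫ x, (f x - ∫ y, f y ∂ν) ^ 2 ∂ν

/-- The concentration profile `α_ν(r)`. -/
def concProfile {n : ℕ} (ν : Measure (Eucl n)) (r : ℝ) : ℝ :=
  sSup {u : ℝ | ∃ A : Set (Eucl n), MeasurableSet A ∧ (1 : ℝ≥0∞) / 2 ≤ ν A ∧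
    u = 1 - (ν (A + Metric.closedBall 0 r)).toReal}

/-- The total variation distance `sup{|μ(f) - ν(f)| : 0 ≤ f ≤ 1 measurable}`. -/
def dTV {n : ℕ} (μ ν : Measure (Eucl n)) : ℝ :=
  sSup {d : ℝ | ∃ f : Eucl n → ℝ, Measurable f ∧ (∀ x, 0 ≤ f x ∧ f x ≤ 1) ∧
    d = |(∫ x, f x ∂μ) - ∫ x, f x ∂ν|}

/-- The Kantorovich-Rubinstein (Wasserstein-1) distance. -/
def W1 {n : ℕ} (ν μ : Measure (Eucl n)) : ℝ :=
  sSup {d : ℝ | ∃ f : Eucl n → ℝ, LipschitzWith 1 f ∧ d = (∫ x, f x ∂ν) - ∫ x, f x ∂μ}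

/-- The bounded-Lipschitz distance. -/
def dBL {n : ℕ} (μ ν : Measure (Eucl n)) : ℝ :=
  sSup {d : ℝ | ∃ f : Eucl n → ℝ, LipschitzWith 1 f ∧ (∀ x, |f x| ≤ 1) ∧
    d = (∫ x, f x ∂μ) - ∫ x, f x ∂ν}

/-- The Lévy-Prokhorov distance. -/
def dLP {n : ℕ} (μ ν : Measure (Eucl n)) : ℝ :=
  sInf {ε : ℝ | 0 ≤ ε ∧ ∀ A : Set (Eucl n), MeasurableSet A →
    μ A ≤ ν (A + Metric.closedBall 0 ε) + ENNReal.ofReal ε ∧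
    ν A ≤ μ (A + Metric.closedBall 0 ε) + ENNReal.ofReal ε}

/-- The relative entropy `D(ν||μ) = ∫ log(dν/dμ) dν` (for `ν ≪ μ`). -/
def relEntropy {n : ℕ} (ν μ : Measure (Eucl n)) : ℝ :=
  ∫ x, Real.log ((ν.rnDeriv μ x).toReal) ∂ν

/-- The standard Gaussian measure on ℝⁿ, with density `(2π)^{-n/2} e^{-|x|²/2}`. -/
def stdGaussian (n : ℕ) : Measure (Eucl n) :=
  volume.withDensity
    (fun x => ENNReal.ofReal ((2 * π) ^ (-(n : ℝ) / 2) * Real.exp (-‖x‖ ^ 2 / 2)))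
theorem statement0 {n : ℕ} (ν : Measure (Eucl n)) [IsProbabilityMeasure ν]
    (f : Eucl n → ℝ) (K : ℝ≥0) (hlip : LipschitzWith K f) (hbd : IsBoundedFun f)
    (m : ℝ) (hm : IsMedian ν f m) (r : ℝ) (hr : 0 < r) :
    ∫ x, |f x - m| ∂ν ≤ r * (K : ℝ) + 2 * concProfile ν r * oscil f := by
  classical
  obtain ⟨M, hM⟩ := hbd
  have hfc : Continuous f := hlip.continuous
  set A := {x : Eucl n | f x ≤ m} with hA
  set B := {x : Eucl n | m ≤ f x} with hB
  have hAc : IsClosed A := isClosed_le hfc continuous_const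
  have hBc : IsClosed B := isClosed_le continuous_const hfc
  have hball : IsCompact (Metric.closedBall (0 : Eucl n) r) :=
    isCompact_closedBall _ _
  set Ar := A + Metric.closedBall (0 : Eucl n) r with hAr
  set Br := B + Metric.closedBall (0 : Eucl n) r with hBr
  have hArc : IsClosed Ar := hAc.add_right_of_isCompact hball
  have hBrc : IsClosed Br := hBc.add_right_of_isCompact hball
  set S := Ar ∩ Br with hS
  have hSm : MeasurableSet S := (hArc.inter hBrc).measurableSet
  -- nonemptiness facts
  have hAne : A.Nonempty := by
    rcases Set.eq_empty_or_nonempty A with h | h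
    · exfalso
      have := hm.1
      rw [show {x | f x ≤ m} = A from rfl, h] at this
      simp at this
    · exact h
  have hBne : B.Nonempty := by
    rcases Set.eq_empty_or_nonempty B with h | h
    · exfalso
      have := hm.2
      rw [show {x | m ≤ f x} = B from rfl, h] at this
      simp at this
    · exact h
  have hrne : (Set.range f).Nonempty := ⟨f 0, 0, rfl⟩
  have hbdd : BddAbove (Set.range f) := ⟨M, by rintro _ ⟨x, rfl⟩; exact (abs_le.1 (hM x)).2⟩
  have hbddb : BddBelow (Set.range f) := ⟨-M, by rintro _ ⟨x, rfl⟩; exact (abs_le.1 (hM x)).1⟩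
  have hinf_le_m : sInf (Set.range f) ≤ m := by
    obtain ⟨a, ha⟩ := hAne
    exact le_trans (csInf_le hbddb ⟨a, rfl⟩) ha
  have hm_le_sup : m ≤ sSup (Set.range f) := by
    obtain ⟨b, hb⟩ := hBne
    exact le_trans hb (le_csSup hbdd ⟨b, rfl⟩)
  have hosc_nonneg : 0 ≤ oscil f := by
    have : sInf (Set.range f) ≤ sSup (Set.range f) := hinf_le_m.trans hm_le_sup
    simpa [oscil] using this
  -- global bound
  have hglob : ∀ x, |f x - m| ≤ oscil f := by
    intro x
    have h1 : f x ≤ sSup (Set.range f) := le_csSup hbdd ⟨x, rfl⟩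
    have h2 : sInf (Set.range f) ≤ f x := csInf_le hbddb ⟨x, rfl⟩
    rw [abs_le]
    constructor
    · simp only [oscil]; linarith
    · simp only [oscil]; linarith
  -- bound on S
  have hSbound : ∀ x ∈ S, |f x - m| ≤ r * (K : ℝ) := by
    rintro x ⟨hxA, hxB⟩
    obtain ⟨a, ha, b, hb, rfl⟩ := hxA
    obtain ⟨a', ha', b', hb', hx'⟩ := hxB
    rw [abs_le]
    have hdista : dist (a + b) a ≤ r := by
      simpa [dist_eq_norm] using mem_closedBall_zero_iff.1 hb
    have h1 : f (a + b) - f a ≤ (K : ℝ) * r := by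
      have := (hlip.dist_le_mul (a + b) a)
      have h2 : |f (a + b) - f a| ≤ (K : ℝ) * r := by
        calc |f (a + b) - f a| = dist (f (a + b)) (f a) := by rw [Real.dist_eq]
        _ ≤ (K : ℝ) * dist (a + b) a := this
        _ ≤ (K : ℝ) * r := by
            exact mul_le_mul_of_nonneg_left hdista (K.coe_nonneg)
      exact (abs_le.1 h2).2
    have hdista' : dist (a' + b') a' ≤ r := by
      simpa [dist_eq_norm] using mem_closedBall_zero_iff.1 hb'
    have h1' : f a' - f (a' + b') ≤ (K : ℝ) * r := by
      have := (hlip.dist_le_mul (a' + b') a')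
      have h2 : |f (a' + b') - f a'| ≤ (K : ℝ) * r := by
        calc |f (a' + b') - f a'| = dist (f (a' + b')) (f a') := by rw [Real.dist_eq]
        _ ≤ (K : ℝ) * dist (a' + b') a' := this
        _ ≤ (K : ℝ) * r := mul_le_mul_of_nonneg_left hdista' K.coe_nonneg
      have := (abs_le.1 h2).1
      linarith
    constructor
    · have : m ≤ f a' := ha'
      rw [← hx']
      nlinarith [mul_comm (K : ℝ) r]
    · have : f a ≤ m := ha
      nlinarith [mul_comm (K : ℝ) r]
  -- integrability
  have hg_meas : AEStronglyMeasurable (fun x => |f x - m|) ν :=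
    ((hfc.sub continuous_const).abs).aestronglyMeasurable
  have hg_int : Integrable (fun x => |f x - m|) ν := by
    refine (integrable_const (oscil f)).mono' hg_meas ?_
    filter_upwards with x
    simpa [abs_of_nonneg (abs_nonneg _)] using hglob x
  -- concentration profile bounds
  have hbddα : BddAbove {u : ℝ | ∃ A : Set (Eucl n), MeasurableSet A ∧ (1 : ℝ≥0∞) / 2 ≤ ν A ∧
      u = 1 - (ν (A + Metric.closedBall 0 r)).toReal} := by
    refine ⟨1, ?_⟩
    rintro u ⟨C, _, _, rfl⟩
    have := ENNReal.toReal_nonneg (a := ν (C + Metric.closedBall 0 r))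
    linarith
  have hαA : 1 - (ν Ar).toReal ≤ concProfile ν r := by
    apply le_csSup hbddα
    exact ⟨A, hAc.measurableSet, hm.1, rfl⟩
  have hαB : 1 - (ν Br).toReal ≤ concProfile ν r := by
    apply le_csSup hbddα
    exact ⟨B, hBc.measurableSet, hm.2, rfl⟩
  -- measure of complement of S
  have hνScompl : (ν Sᶜ).toReal ≤ 2 * concProfile ν r := by
    have hunion : Sᶜ = Arᶜ ∪ Brᶜ := by rw [hS, Set.compl_inter]
    have h1 : ν Sᶜ ≤ ν Arᶜ + ν Brᶜ := hunion ▸ measure_union_le _ _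
    have hcomplAr : (ν Arᶜ).toReal = 1 - (ν Ar).toReal := by
      rw [measure_compl hArc.measurableSet (measure_ne_top ν _), measure_univ,
        ENNReal.toReal_sub_of_le prob_le_one ENNReal.one_ne_top, ENNReal.toReal_one]
    have hcomplBr : (ν Brᶜ).toReal = 1 - (ν Br).toReal := by
      rw [measure_compl hBrc.measurableSet (measure_ne_top ν _), measure_univ,
        ENNReal.toReal_sub_of_le prob_le_one ENNReal.one_ne_top, ENNReal.toReal_one]
    calc (ν Sᶜ).toReal ≤ (ν Arᶜ + ν Brᶜ).toReal := by
          exact ENNReal.toReal_mono (by finiteness) h1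
      _ = (ν Arᶜ).toReal + (ν Brᶜ).toReal := ENNReal.toReal_add (by finiteness) (by finiteness)
      _ = (1 - (ν Ar).toReal) + (1 - (ν Br).toReal) := by rw [hcomplAr, hcomplBr]
      _ ≤ concProfile ν r + concProfile ν r := add_le_add hαA hαB
      _ = 2 * concProfile ν r := by ring
  -- split the integral
  have hsplit : ∫ x, |f x - m| ∂ν
      = (∫ x in S, |f x - m| ∂ν) + ∫ x in Sᶜ, |f x - m| ∂ν :=
    (integral_add_compl hSm hg_int).symm
  have hintS : ∫ x in S, |f x - m| ∂ν ≤ r * (K : ℝ) * (ν S).toReal := by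
    calc ∫ x in S, |f x - m| ∂ν ≤ ∫ _x in S, r * (K : ℝ) ∂ν := by
          apply setIntegral_mono_on hg_int.integrableOn (integrableOn_const (measure_ne_top ν S)) hSm
          exact hSbound
      _ = (ν S).toReal * (r * (K : ℝ)) := by rw [setIntegral_const]; simp [Measure.real]
      _ = r * (K : ℝ) * (ν S).toReal := by ring
  have hintSc : ∫ x in Sᶜ, |f x - m| ∂ν ≤ oscil f * (ν Sᶜ).toReal := by
    calc ∫ x in Sᶜ, |f x - m| ∂ν ≤ ∫ _x in Sᶜ, oscil f ∂ν := by
          apply setIntegral_mono_on hg_int.integrableOn (integrableOn_const (measure_ne_top ν Sᶜ)) hSm.compl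
          exact fun x _ => hglob x
      _ = (ν Sᶜ).toReal * oscil f := by rw [setIntegral_const]; simp [Measure.real]
      _ = oscil f * (ν Sᶜ).toReal := by ring
  have hKr : 0 ≤ r * (K : ℝ) := mul_nonneg hr.le K.coe_nonneg
  calc ∫ x, |f x - m| ∂ν = (∫ x in S, |f x - m| ∂ν) + ∫ x in Sᶜ, |f x - m| ∂ν := hsplit
    _ ≤ r * (K : ℝ) * (ν S).toReal + oscil f * (ν Sᶜ).toReal := add_le_add hintS hintSc
    _ ≤ r * (K : ℝ) * 1 + oscil f * (2 * concProfile ν r) := by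
        refine add_le_add ?_ (mul_le_mul_of_nonneg_left hνScompl hosc_nonneg)
        have h1 : (ν S).toReal ≤ 1 := by
          simpa using ENNReal.toReal_mono ENNReal.one_ne_top (prob_le_one (μ := ν) (s := S))
        exact mul_le_mul_of_nonneg_left h1 hKr
    _ = r * (K : ℝ) + 2 * concProfile ν r * oscil f := by ring
end
end

section
/- Let μ and ν be probability measures on ℝⁿ with finite first moments and W₁(ν,μ) < ∞. Fix s > 0 and β ≥ 0 and suppose that for every bounded Lipschitz function f, ∫|f − μ(f)| dμ ≤ β·‖|∇f|‖_∞ + s·Osc(f). Then for every bounded Lipschitz function f, ∫|f − ν(f)| dν ≤ (β + 2·W₁(ν,μ))·‖|∇f|‖_∞ + s·Osc(f). -/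
open MeasureTheory Real Set
open scoped ENNReal NNReal Pointwise

noncomputable section

lemma w1_aux {n : ℕ} (μ ν : Measure (Eucl n)) [IsProbabilityMeasure μ]
    [IsProbabilityMeasure ν]
    (hW : BddAbove {d : ℝ | ∃ f : Eucl n → ℝ, LipschitzWith 1 f ∧
      d = (∫ x, f x ∂ν) - ∫ x, f x ∂μ})
    (g : Eucl n → ℝ) (K : ℝ≥0) (hg : LipschitzWith K g) :
    (∫ x, g x ∂ν) - ∫ x, g x ∂μ ≤ (K : ℝ) * W1 ν μ := by
  rcases eq_or_ne K 0 with hK | hK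
  · subst hK
    have hconst : ∀ x, g x = g 0 := fun x => by
      have h := hg.dist_le_mul x 0
      simp only [NNReal.coe_zero, zero_mul] at h
      exact dist_le_zero.mp h
    have : (fun x : Eucl n => g x) = fun _ => g 0 := funext hconst
    rw [this]
    simp
  · have hKpos : (0 : ℝ) < (K : ℝ) := by positivity
    set h : Eucl n → ℝ := fun x => (K : ℝ)⁻¹ * g x with hh_def
    have hh : LipschitzWith 1 h := by
      rw [lipschitzWith_iff_dist_le_mul]
      intro x y
      have h1 := hg.dist_le_mul x y
      have h2 : dist (h x) (h y) = (K : ℝ)⁻¹ * dist (g x) (g y) := by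
        simp only [hh_def, Real.dist_eq, ← mul_sub, abs_mul, abs_of_pos (inv_pos.mpr hKpos)]
      rw [h2]
      calc (K : ℝ)⁻¹ * dist (g x) (g y) ≤ (K : ℝ)⁻¹ * ((K : ℝ) * dist x y) := by
            exact mul_le_mul_of_nonneg_left h1 (le_of_lt (inv_pos.mpr hKpos))
        _ = 1 * dist x y := by field_simp
    have hmem : ((∫ x, h x ∂ν) - ∫ x, h x ∂μ) ∈
        {d : ℝ | ∃ f : Eucl n → ℝ, LipschitzWith 1 f ∧
          d = (∫ x, f x ∂ν) - ∫ x, f x ∂μ} := ⟨h, hh, rfl⟩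
    have hle := le_csSup hW hmem
    have hint : ∀ (ρ : Measure (Eucl n)), ∫ x, h x ∂ρ = (K : ℝ)⁻¹ * ∫ x, g x ∂ρ := by
      intro ρ; simp only [hh_def]; exact integral_const_mul _ _
    rw [hint ν, hint μ, ← mul_sub] at hle
    have := mul_le_mul_of_nonneg_left hle (le_of_lt hKpos)
    rw [← mul_assoc, mul_inv_cancel₀ (ne_of_gt hKpos), one_mul] at this
    exact this.trans_eq rfl

theorem statement14 {n : ℕ} (μ ν : Measure (Eucl n)) [IsProbabilityMeasure μ]
    [IsProbabilityMeasure ν]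
    (hμ1 : Integrable (fun x : Eucl n => ‖x‖) μ)
    (hν1 : Integrable (fun x : Eucl n => ‖x‖) ν)
    (hW : BddAbove {d : ℝ | ∃ f : Eucl n → ℝ, LipschitzWith 1 f ∧
      d = (∫ x, f x ∂ν) - ∫ x, f x ∂μ})
    (s β : ℝ) (hs : 0 < s) (hβ : 0 ≤ β)
    (H : ∀ (f : Eucl n → ℝ) (K : ℝ≥0), LipschitzWith K f → IsBoundedFun f →
      ∫ x, |f x - ∫ y, f y ∂μ| ∂μ ≤ β * (K : ℝ) + s * oscil f) :
    ∀ (f : Eucl n → ℝ) (K : ℝ≥0), LipschitzWith K f → IsBoundedFun f →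
      ∫ x, |f x - ∫ y, f y ∂ν| ∂ν ≤ (β + 2 * W1 ν μ) * (K : ℝ) + s * oscil f := by
  intro f K hf hb
  obtain ⟨M, hM⟩ := hb
  set a := ∫ y, f y ∂μ with ha
  set b := ∫ y, f y ∂ν with hbdef
  -- integrability of the relevant functions under probability measures
  have hint : ∀ (ρ : Measure (Eucl n)) [IsProbabilityMeasure ρ] (c : ℝ),
      Integrable (fun x => |f x - c|) ρ := by
    intro ρ _ c
    have hcont : Continuous fun x => |f x - c| :=
      (hf.continuous.sub continuous_const).abs
    refine ⟨hcont.aestronglyMeasurable, ?_⟩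
    apply HasFiniteIntegral.of_bounded (C := M + |c|)
    filter_upwards with x
    simp only [Real.norm_eq_abs, abs_abs]
    calc |f x - c| ≤ |f x| + |c| := abs_sub _ _
      _ ≤ M + |c| := by linarith [hM x]
  -- |f x - b| ≤ |f x - a| + |a - b|
  have step1 : ∫ x, |f x - b| ∂ν ≤ (∫ x, |f x - a| ∂ν) + |a - b| := by
    have hle : ∀ x, |f x - b| ≤ |f x - a| + |a - b| := by
      intro x
      calc |f x - b| = |(f x - a) + (a - b)| := by ring_nf
        _ ≤ |f x - a| + |a - b| := abs_add_le _ _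
    calc ∫ x, |f x - b| ∂ν ≤ ∫ x, (|f x - a| + |a - b|) ∂ν := by
          apply integral_mono (hint ν b) ((hint ν a).add (integrable_const _)) hle
      _ = (∫ x, |f x - a| ∂ν) + |a - b| := by
          rw [integral_add (hint ν a) (integrable_const _)]
          simp
  -- step 2: transport |f - a|
  have hgLip : LipschitzWith K (fun x => |f x - a|) := by
    have h1 : LipschitzWith K (fun x => f x - a) := by
      intro x y; simpa [edist_sub_right] using hf x y
    simpa [Function.comp_def] using (LipschitzWith.comp lipschitzWith_one_norm h1 : LipschitzWith (1 * K) _)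
  have step2 : (∫ x, |f x - a| ∂ν) - ∫ x, |f x - a| ∂μ ≤ (K : ℝ) * W1 ν μ :=
    w1_aux μ ν hW _ K hgLip
  -- step 3: |a - b| ≤ K * W1
  have h3a : b - a ≤ (K : ℝ) * W1 ν μ := w1_aux μ ν hW f K hf
  have h3b : a - b ≤ (K : ℝ) * W1 ν μ := by
    have := w1_aux μ ν hW (fun x => -f x) K hf.neg
    simp only [integral_neg] at this
    linarith
  have step3 : |a - b| ≤ (K : ℝ) * W1 ν μ := abs_sub_le_iff.mpr ⟨h3b, h3a⟩
  -- step 4: hypothesis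
  have step4 : ∫ x, |f x - a| ∂μ ≤ β * (K : ℝ) + s * oscil f := H f K hf ⟨M, hM⟩
  linarith
end
end
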